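/- Let Ŵ be an n×n row-stochastic matrix, f̂₀ ∈ [-1,1]ⁿ, 𝒱 an interval partition of [0,1] with weights p̂ᵢ = λ(Vⁱ), and W_𝒱, f₀ the associated DiKernel and opinion function. Then for every t ≥ 0, the average opinion in the continuous model equals the p̂-weighted average in the discrete model: ∫₀¹ (Tᵗ(W_𝒱)f₀)(x)dx = ∑ᵢ p̂ᵢ (Ŵᵗ f̂₀)ᵢ. -/

import Mathlib

open MeasureTheory Set

noncomputable def Tk (W : ℝ → ℝ → ℝ) (f : ℝ → ℝ) : ℝ → ℝ :=
  fun x => ∫ y in Icc (0:ℝ) 1, W x y * f y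

noncomputable def L1norm (f : ℝ → ℝ) : ℝ :=
  ∫ x in Icc (0:ℝ) 1, |f x|

noncomputable def cutNorm (U : ℝ → ℝ → ℝ) : ℝ :=
  ⨆ p : {p : Set ℝ × Set ℝ // MeasurableSet p.1 ∧ MeasurableSet p.2},
    |∫ x in p.1.1 ∩ Icc (0:ℝ) 1, ∫ y in p.1.2 ∩ Icc (0:ℝ) 1, U x y|

structure IntervalPartition (n : ℕ) where
  a : ℕ → ℝ
  mono : ∀ i < n, a i < a (i + 1)
  first : a 0 = 0
  last : a n = 1

def IntervalPartition.cell {n : ℕ} (P : IntervalPartition n) (i : Fin n) : Set ℝ :=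
  if (i : ℕ) + 1 = n then Icc (P.a i) (P.a ((i : ℕ) + 1))
  else Ico (P.a i) (P.a ((i : ℕ) + 1))

noncomputable def discretize {n : ℕ} (W : ℝ → ℝ → ℝ) (P : IntervalPartition n) : ℝ → ℝ → ℝ :=
  fun x y => ∑ i : Fin n, ∑ j : Fin n,
    (P.cell i).indicator 1 x * (P.cell j).indicator 1 y *
      ((∫ u in P.cell i, ∫ v in P.cell j, W u v) /
        ((P.a ((i : ℕ) + 1) - P.a i) * (P.a ((j : ℕ) + 1) - P.a j)))

noncomputable def blockKernel {n : ℕ} (P : IntervalPartition n)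
    (Wm : Matrix (Fin n) (Fin n) ℝ) : ℝ → ℝ → ℝ :=
  fun x y => ∑ i : Fin n, ∑ j : Fin n,
    (P.cell i).indicator 1 x * (P.cell j).indicator 1 y *
      (Wm i j / (P.a ((j : ℕ) + 1) - P.a j))

noncomputable def blockFun {n : ℕ} (P : IntervalPartition n) (v : Fin n → ℝ) : ℝ → ℝ :=
  fun x => ∑ i : Fin n, (P.cell i).indicator 1 x * v i


namespace StmtAux

variable {n : ℕ} (P : IntervalPartition n)

lemma ip_mono : ∀ m ≤ n, ∀ k ≤ m, P.a k ≤ P.a m := by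
  intro m hm
  induction m with
  | zero => intro k hk; have : k = 0 := Nat.le_zero.mp hk; simp [this]
  | succ m ih =>
    intro k hk
    rcases Nat.lt_or_ge k (m + 1) with h | h
    · exact le_trans (ih (by omega) k (by omega)) (P.mono m (by omega)).le
    · have : k = m + 1 := by omega
      simp [this]

lemma len_pos (i : Fin n) : 0 < P.a ((i : ℕ) + 1) - P.a i :=
  sub_pos.mpr (P.mono i i.isLt)

lemma cell_meas (i : Fin n) : MeasurableSet (P.cell i) := by
  unfold IntervalPartition.cell; split
  · exact measurableSet_Icc
  · exact measurableSet_Ico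

lemma cell_sub (i : Fin n) : P.cell i ⊆ Icc 0 1 := by
  have h1 : (0:ℝ) ≤ P.a i := by
    have := ip_mono P i (le_of_lt i.isLt) 0 (Nat.zero_le _); rwa [P.first] at this
  have h2 : P.a ((i : ℕ) + 1) ≤ 1 := by
    have := ip_mono P n le_rfl ((i : ℕ) + 1) i.isLt; rwa [P.last] at this
  unfold IntervalPartition.cell; split
  · exact Icc_subset_Icc h1 h2
  · exact Ico_subset_Icc_self.trans (Icc_subset_Icc h1 h2)

lemma cell_vol (i : Fin n) :
    volume (P.cell i) = ENNReal.ofReal (P.a ((i : ℕ) + 1) - P.a i) := by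
  unfold IntervalPartition.cell; split
  · rw [Real.volume_Icc]
  · rw [Real.volume_Ico]

lemma cell_disj {i j : Fin n} (h : i ≠ j) : P.cell i ∩ P.cell j = ∅ := by
  have key : ∀ i j : Fin n, (i : ℕ) < (j : ℕ) → P.cell i ∩ P.cell j = ∅ := by
    intro i j hij
    have hin : (i : ℕ) + 1 ≠ n := by have := j.isLt; omega
    have hle : P.a ((i : ℕ) + 1) ≤ P.a j :=
      ip_mono P j (le_of_lt j.isLt) ((i : ℕ) + 1) hij
    ext x
    simp only [mem_inter_iff, mem_empty_iff_false, iff_false, not_and]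
    intro hx1 hx2
    rw [IntervalPartition.cell, if_neg hin] at hx1
    have hxj : P.a (j : ℕ) ≤ x := by
      rw [IntervalPartition.cell] at hx2
      split at hx2
      · exact hx2.1
      · exact hx2.1
    exact absurd (hx1.2.trans_le (hle.trans hxj)) (lt_irrefl x)
  rcases lt_trichotomy (i : ℕ) (j : ℕ) with hlt | heq | hgt
  · exact key i j hlt
  · exact absurd (Fin.ext heq) h
  · rw [Set.inter_comm]; exact key j i hgt

lemma ind_mul (S T : Set ℝ) (y : ℝ) :
    S.indicator (1 : ℝ → ℝ) y * T.indicator 1 y = (S ∩ T).indicator 1 y := by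
  by_cases hS : y ∈ S <;> by_cases hT : y ∈ T <;>
    simp [Set.indicator_apply, hS, hT]

lemma ind_eq (S : Set ℝ) (C : ℝ) :
    (fun y => S.indicator (1 : ℝ → ℝ) y * C) = S.indicator (fun _ => C) := by
  funext y; by_cases h : y ∈ S <;> simp [Set.indicator_apply, h]

lemma integrable_ind (S : Set ℝ) (hS : MeasurableSet S) (C : ℝ) :
    Integrable (fun y => S.indicator (1 : ℝ → ℝ) y * C)
      (volume.restrict (Icc (0:ℝ) 1)) := by
  rw [ind_eq]
  apply Integrable.indicator _ hS
  apply (integrableOn_const_iff).mpr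
  right
  rw [Real.volume_Icc]
  exact ENNReal.ofReal_lt_top

lemma integral_ind (S : Set ℝ) (hS : MeasurableSet S) (hsub : S ⊆ Icc 0 1) (C : ℝ) :
    ∫ y in Icc (0:ℝ) 1, S.indicator (1 : ℝ → ℝ) y * C = (volume S).toReal * C := by
  rw [ind_eq, MeasureTheory.setIntegral_indicator hS,
    Set.inter_eq_self_of_subset_right hsub, MeasureTheory.setIntegral_const, smul_eq_mul]
  rfl

lemma Tk_block (Wm : Matrix (Fin n) (Fin n) ℝ) (v : Fin n → ℝ) :
    Tk (blockKernel P Wm) (blockFun P v) = blockFun P (Wm.mulVec v) := by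
  funext x
  show (∫ y in Icc (0:ℝ) 1, blockKernel P Wm x y * blockFun P v y) = _
  have hexp : ∀ y, blockKernel P Wm x y * blockFun P v y
      = ∑ i : Fin n, ∑ j : Fin n, ∑ k : Fin n,
          (P.cell j ∩ P.cell k).indicator 1 y *
            ((P.cell i).indicator 1 x * (Wm i j / (P.a ((j : ℕ) + 1) - P.a j)) * v k) := by
    intro y
    unfold blockKernel blockFun
    rw [Finset.sum_mul]
    refine Finset.sum_congr rfl fun i _ => ?_
    rw [Finset.sum_mul]
    refine Finset.sum_congr rfl fun j _ => ?_
    rw [Finset.mul_sum]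
    refine Finset.sum_congr rfl fun k _ => ?_
    rw [← ind_mul]; ring
  simp only [hexp]
  rw [integral_finset_sum _ (fun i _ => integrable_finset_sum _
    (fun j _ => integrable_finset_sum _
    (fun k _ => integrable_ind _ ((cell_meas P j).inter (cell_meas P k)) _)))]
  unfold blockFun
  refine Finset.sum_congr rfl fun i _ => ?_
  rw [integral_finset_sum _ (fun j _ => integrable_finset_sum _
    (fun k _ => integrable_ind _ ((cell_meas P j).inter (cell_meas P k)) _))]
  have hstep : ∀ j : Fin n,
      (∫ y in Icc (0:ℝ) 1, ∑ k : Fin n,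
        (P.cell j ∩ P.cell k).indicator 1 y *
          ((P.cell i).indicator 1 x * (Wm i j / (P.a ((j : ℕ) + 1) - P.a j)) * v k))
      = (P.cell i).indicator 1 x * (Wm i j * v j) := by
    intro j
    rw [integral_finset_sum _
      (fun k _ => integrable_ind _ ((cell_meas P j).inter (cell_meas P k)) _)]
    have := fun k => integral_ind (P.cell j ∩ P.cell k)
      ((cell_meas P j).inter (cell_meas P k))
      ((Set.inter_subset_left).trans (cell_sub P j))
      ((P.cell i).indicator 1 x * (Wm i j / (P.a ((j : ℕ) + 1) - P.a j)) * v k)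
    simp only [this]
    rw [Finset.sum_eq_single_of_mem j (Finset.mem_univ j)]
    · rw [Set.inter_self, cell_vol, ENNReal.toReal_ofReal (len_pos P j).le]
      have hne : P.a ((j : ℕ) + 1) - P.a j ≠ 0 := (len_pos P j).ne'
      field_simp
    · intro k _ hk
      rw [cell_disj P (Ne.symm hk)]
      simp
  simp only [hstep]
  rw [← Finset.mul_sum, Matrix.mulVec, dotProduct]

lemma iterate_block (Wm : Matrix (Fin n) (Fin n) ℝ) (f₀ : Fin n → ℝ) (t : ℕ) :
    (Tk (blockKernel P Wm))^[t] (blockFun P f₀) = blockFun P ((Wm ^ t).mulVec f₀) := by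
  induction t with
  | zero => simp [Matrix.one_mulVec]
  | succ t ih =>
    rw [Function.iterate_succ_apply', ih, Tk_block, pow_succ', ← Matrix.mulVec_mulVec]

lemma integral_blockFun (v : Fin n → ℝ) :
    ∫ x in Icc (0:ℝ) 1, blockFun P v x = ∑ i : Fin n, (P.a ((i : ℕ) + 1) - P.a i) * v i := by
  unfold blockFun
  rw [integral_finset_sum _ (fun i _ => integrable_ind _ (cell_meas P i) _)]
  refine Finset.sum_congr rfl fun i _ => ?_
  rw [integral_ind _ (cell_meas P i) (cell_sub P i), cell_vol,
    ENNReal.toReal_ofReal (len_pos P i).le]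

end StmtAux

theorem stmt_9 {n : ℕ} (Wm : Matrix (Fin n) (Fin n) ℝ) (f₀ : Fin n → ℝ)
    (P : IntervalPartition n)
    (hWnn : ∀ i j, 0 ≤ Wm i j) (hWrow : ∀ i, ∑ j, Wm i j = 1)
    (hf : ∀ i, f₀ i ∈ Icc (-1:ℝ) 1) :
    ∀ t : ℕ,
      (∫ x in Icc (0:ℝ) 1, (Tk (blockKernel P Wm))^[t] (blockFun P f₀) x) =
        ∑ i : Fin n, (P.a ((i : ℕ) + 1) - P.a i) * ((Wm ^ t).mulVec f₀) i := by
  intro t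
  rw [StmtAux.iterate_block, StmtAux.integral_blockFun]
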